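/- Reflexivity is not frame-definable in the language of knowing whether: there is no set Γ of formulas in the Δ-only modal language such that a frame validates Γ iff it is reflexive. Witness: the frame F1 with three worlds s→t→u (and no other arrows) and the frame F2 with a single reflexive world validate exactly the same Δ-formulas, but F1 is not reflexive while F2 is. -/
import Mathlib


/-- Formulas of the knowing-whether language: atoms, ¬, ∧, Δ. -/
inductive NCLForm where
  | atom : ℕ → NCLForm
  | neg : NCLForm → NCLForm
  | conj : NCLForm → NCLForm → NCLForm
  | delta : NCLForm → NCLForm

/-- Satisfaction in a Kripke model. -/
def nclSat {S : Type*} (R : S → S → Prop) (V : ℕ → S → Prop) : NCLForm → S → Prop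
  | .atom n => fun s => V n s
  | .neg φ => fun s => ¬ nclSat R V φ s
  | .conj φ ψ => fun s => nclSat R V φ s ∧ nclSat R V ψ s
  | .delta φ => fun s =>
      (∀ t, R s t → nclSat R V φ t) ∨ (∀ t, R s t → ¬ nclSat R V φ t)

/-- A frame (S,R) validates φ: φ is true at every world under every valuation. -/
def frameValid {S : Type*} (R : S → S → Prop) (φ : NCLForm) : Prop :=
  ∀ (V : ℕ → S → Prop) (s : S), nclSat R V φ s

/-- The frame F1: three worlds s → t → u, no other arrows. -/
def R1 : Fin 3 → Fin 3 → Prop := fun a b => (a = 0 ∧ b = 1) ∨ (a = 1 ∧ b = 2)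

/-- The frame F2: a single reflexive world. -/
def R2 : Unit → Unit → Prop := fun _ _ => True

/-- Propositional evaluation with Δψ replaced by ⊤. -/
def peval (b : ℕ → Prop) : NCLForm → Prop
  | .atom n => b n
  | .neg φ => ¬ peval b φ
  | .conj φ ψ => peval b φ ∧ peval b ψ
  | .delta _ => True

/-- In a frame where every world has at most one successor, satisfaction
reduces to propositional evaluation. -/
lemma nclSat_of_uniq {S : Type*} {R : S → S → Prop}
    (h : ∀ s t t', R s t → R s t' → t = t') (V : ℕ → S → Prop) :
    ∀ φ s, nclSat R V φ s ↔ peval (fun n => V n s) φ := by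
  intro φ
  induction φ with
  | atom n => intro s; rfl
  | neg φ ih => intro s; simp [nclSat, peval, ih s]
  | conj φ ψ ih1 ih2 => intro s; simp [nclSat, peval, ih1 s, ih2 s]
  | delta φ ih =>
      intro s
      simp only [nclSat, peval, iff_true]
      by_cases hc : ∀ t, R s t → nclSat R V φ t
      · exact Or.inl hc
      · right
        push_neg at hc
        obtain ⟨t, ht, hnt⟩ := hc
        intro t' ht'
        rwa [h s t' t ht' ht]

lemma uniqR1 : ∀ s t t', R1 s t → R1 s t' → t = t' := by
  intro s t t' h h'
  rcases h with ⟨hs, ht⟩ | ⟨hs, ht⟩ <;> rcases h' with ⟨hs', ht'⟩ | ⟨hs', ht'⟩ <;>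
    simp_all

lemma uniqR2 : ∀ s t t' : Unit, R2 s t → R2 s t' → t = t' := by
  intro s t t' _ _; rfl

lemma frameValid_iff_peval_R1 (φ : NCLForm) :
    frameValid R1 φ ↔ ∀ b : ℕ → Prop, peval b φ := by
  constructor
  · intro h b
    have := h (fun n _ => b n) 0
    rwa [nclSat_of_uniq uniqR1] at this
  · intro h V s
    rw [nclSat_of_uniq uniqR1]
    exact h _

lemma frameValid_iff_peval_R2 (φ : NCLForm) :
    frameValid R2 φ ↔ ∀ b : ℕ → Prop, peval b φ := by
  constructor
  · intro h b
    have := h (fun n _ => b n) ()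
    rwa [nclSat_of_uniq uniqR2] at this
  · intro h V s
    rw [nclSat_of_uniq uniqR2]
    exact h _

theorem reflexivity_not_delta_definable :
    (¬ ∃ Γ : Set NCLForm, ∀ (S : Type) (R : S → S → Prop),
        (∀ φ ∈ Γ, frameValid R φ) ↔ (∀ s, R s s)) ∧
    (∀ φ : NCLForm, frameValid R1 φ ↔ frameValid R2 φ) ∧
    ¬ (∀ s, R1 s s) ∧ (∀ s, R2 s s) := by
  have hsame : ∀ φ : NCLForm, frameValid R1 φ ↔ frameValid R2 φ := by
    intro φ; rw [frameValid_iff_peval_R1, frameValid_iff_peval_R2]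
  have hnrefl1 : ¬ (∀ s, R1 s s) := by
    intro h
    have := h 0
    rcases this with ⟨_, h0⟩ | ⟨h0, _⟩ <;> exact absurd h0 (by decide)
  refine ⟨?_, hsame, hnrefl1, fun _ => trivial⟩
  rintro ⟨Γ, hΓ⟩
  have h2 : ∀ φ ∈ Γ, frameValid R2 φ := (hΓ Unit R2).mpr (fun _ => trivial)
  have h1 : ∀ φ ∈ Γ, frameValid R1 φ := fun φ hφ => (hsame φ).mpr (h2 φ hφ)
  exact hnrefl1 ((hΓ (Fin 3) R1).mp h1)
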